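/- A stable radical ideal of an integral domain is divisorial: if I is a nonzero radical ideal of a domain R that is invertible in its endomorphism ring (I : I), then I = (R : (R : I)). -/

import Mathlib

theorem stmt_13 {R : Type*} [CommRing R] [IsDomain R] (I : Ideal R) (hI : I ≠ ⊥)
    (hrad : I.IsRadical)
    (J : FractionalIdeal (nonZeroDivisors R) (FractionRing R))
    (hJ : J = (I : FractionalIdeal (nonZeroDivisors R) (FractionRing R)))
    (hstable : J * (J / (J * J)) = J / J) :
    J = 1 / (1 / J) := by
  set K := FractionRing R
  have hJ0 : J ≠ 0 := by
    rw [hJ, FractionalIdeal.coeIdeal_ne_zero]; exact hI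
  have hJJ0 : J * J ≠ 0 := by
    intro h
    apply hJ0
    rw [FractionalIdeal.eq_zero_iff] at h ⊢
    intro y hy
    have := h (y * y) (FractionalIdeal.mul_mem_mul hy hy)
    exact (mul_self_eq_zero).mp this
  have hJle1 : J ≤ 1 := hJ ▸ FractionalIdeal.coeIdeal_le_one
  -- 1 ∈ 1/J
  have h1mem : (1 : K) ∈ (1 / J : FractionalIdeal (nonZeroDivisors R) K) := by
    rw [FractionalIdeal.mem_div_iff_of_ne_zero hJ0]
    intro y hy
    rw [one_mul]
    exact hJle1 hy
  have hinv0 : (1 / J : FractionalIdeal (nonZeroDivisors R) K) ≠ 0 := by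
    intro h
    rw [h] at h1mem
    exact one_ne_zero ((FractionalIdeal.mem_zero_iff _).mp h1mem)
  apply le_antisymm
  · -- J ≤ 1/(1/J)
    rw [FractionalIdeal.le_div_iff_of_ne_zero hinv0]
    intro x hx y hy
    rw [mul_comm]
    exact (FractionalIdeal.mem_div_iff_of_ne_zero hJ0).mp hy x hx
  · -- 1/(1/J) ≤ J
    intro x hx'
    have hx : ∀ y ∈ (1 / J : FractionalIdeal (nonZeroDivisors R) K),
        x * y ∈ (1 : FractionalIdeal (nonZeroDivisors R) K) :=
      (FractionalIdeal.mem_div_iff_of_ne_zero hinv0).mp hx'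
    show x ∈ J
    -- x ∈ 1
    have hx1 : x ∈ (1 : FractionalIdeal (nonZeroDivisors R) K) := by
      have := hx 1 h1mem
      rwa [mul_one] at this
    -- key: ∀ y ∈ J/(J*J), x*x*y ∈ 1
    have key : ∀ y ∈ (J / (J * J) : FractionalIdeal (nonZeroDivisors R) K),
        x * x * y ∈ (1 : FractionalIdeal (nonZeroDivisors R) K) := by
      intro y hy
      rw [FractionalIdeal.mem_div_iff_of_ne_zero hJJ0] at hy
      -- x*y ∈ 1/J
      have hxy : x * y ∈ (1 / J : FractionalIdeal (nonZeroDivisors R) K) := by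
        rw [FractionalIdeal.mem_div_iff_of_ne_zero hJ0]
        intro a ha
        -- y*a ∈ 1/J
        have hya : y * a ∈ (1 / J : FractionalIdeal (nonZeroDivisors R) K) := by
          rw [FractionalIdeal.mem_div_iff_of_ne_zero hJ0]
          intro b hb
          have : y * (a * b) ∈ J := hy _ (FractionalIdeal.mul_mem_mul ha hb)
          have := hJle1 this
          rwa [mul_assoc]
        have := hx _ hya
        rwa [mul_comm x (y * a), mul_assoc, mul_comm a x, ← mul_assoc, mul_comm y x] at this
      have := hx _ hxy
      rwa [← mul_assoc] at this
    -- 1 ∈ J/J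
    have h1T : (1 : K) ∈ (J / J : FractionalIdeal (nonZeroDivisors R) K) := by
      rw [FractionalIdeal.mem_div_iff_of_ne_zero hJ0]
      intro y hy; rwa [one_mul]
    rw [← hstable] at h1T
    -- x*x ∈ J
    have hxx : x * x ∈ J := by
      have hmul : ∀ t ∈ (J * (J / (J * J)) : FractionalIdeal (nonZeroDivisors R) K),
          x * x * t ∈ J := by
        intro t ht
        have ht' : t ∈ (↑J * ↑(J / (J * J)) : Submodule R K) := by
          rw [← FractionalIdeal.coe_mul]; exact ht
        refine Submodule.mul_induction_on ht' ?_ ?_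
        · intro m hm n hn
          have hn' : x * x * n ∈ (1 : FractionalIdeal (nonZeroDivisors R) K) := key n hn
          obtain ⟨r, hr⟩ := (FractionalIdeal.mem_one_iff _).mp hn'
          have : x * x * (m * n) = r • m := by
            rw [Algebra.smul_def, hr]; ring
          rw [this]
          exact Submodule.smul_mem _ r hm
        · intro a b ha hb
          have : x * x * (a + b) = x * x * a + x * x * b := by ring
          rw [this]
          exact Submodule.add_mem _ ha hb
      have := hmul 1 h1T
      rwa [mul_one] at this
    -- conclude via radical
    obtain ⟨r, hr⟩ := (FractionalIdeal.mem_one_iff _).mp hx1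
    rw [hJ] at hxx ⊢
    obtain ⟨a, haI, ha⟩ := (FractionalIdeal.mem_coeIdeal _).mp hxx
    have hr2 : r * r = a := by
      apply IsFractionRing.injective R K
      rw [map_mul, hr, ha]
    have hrI : r ∈ I := by
      have : r ^ 2 ∈ I := by rw [pow_two, hr2]; exact haI
      exact hrad ⟨2, this⟩
    exact (FractionalIdeal.mem_coeIdeal _).mpr ⟨r, hrI, hr⟩
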